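/- Let X be a topological space, E a commutative Banach algebra, and f, g: X → E bounded mappings with countable oscillation rank. Then the product fg has countable oscillation rank. -/

import Mathlib

open Set Filter Ordinal ENNReal

universe u v

section Defs

variable {X : Type u} {E : Type v}

/-- `f` restricted to `A` is `ε`-fragmented: every nonempty subset of `A` has a relatively
open nonempty piece on which the oscillation (diameter of the image) of `f` is at most `ε`. -/
def EpsFragOn [TopologicalSpace X] [PseudoEMetricSpace E] (f : X → E) (A : Set X)
    (ε : ℝ≥0∞) : Prop :=
  ∀ F : Set X, F ⊆ A → F.Nonempty → ∃ V : Set X, IsOpen V ∧ (V ∩ F).Nonempty ∧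
    EMetric.diam (f '' (V ∩ F)) ≤ ε

/-- The fragmentability index `frag f = inf {ε > 0 : f is ε-fragmented}` (with `inf ∅ = ∞`). -/
noncomputable def fragIdx [TopologicalSpace X] [PseudoEMetricSpace E] (f : X → E) : ℝ≥0∞ :=
  sInf {ε | 0 < ε ∧ EpsFragOn f Set.univ ε}

/-- A set `H` is resolvable: every nonempty `A ⊆ X` has a relatively open nonempty piece
entirely inside `H` or entirely inside its complement. -/
def Resolvable [TopologicalSpace X] (H : Set X) : Prop :=
  ∀ A : Set X, A.Nonempty → ∃ U : Set X, IsOpen U ∧ (U ∩ A).Nonempty ∧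
    (U ∩ A ⊆ H ∨ U ∩ A ⊆ Hᶜ)

/-- The σ-fragmentability index by resolvable sets. -/
noncomputable def sfragIdx [TopologicalSpace X] [PseudoEMetricSpace E] (f : X → E) : ℝ≥0∞ :=
  sInf {ε | 0 < ε ∧ ∃ H : ℕ → Set X, (∀ n, Resolvable (H n)) ∧ (⋃ n, H n) = Set.univ ∧
    ∀ n, EpsFragOn f (H n) ε}

/-- `g` is constant on each set of some resolvable partition of `X`, i.e. on each difference
`U (γ+1) \ U γ` of an increasing transfinite sequence of open sets from `∅` to `X`,
continuous at limit ordinals. -/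
def ConstOnResolvablePartition [TopologicalSpace X] (g : X → E) : Prop :=
  ∃ (κ : Ordinal.{u}) (U : Ordinal.{u} → Set X),
    (∀ α, IsOpen (U α)) ∧ (∀ α β : Ordinal, α ≤ β → U α ⊆ U β) ∧
    U 0 = ∅ ∧ U κ = Set.univ ∧
    (∀ γ, γ ≤ κ → Order.IsSuccLimit γ → U γ = ⋃ α < γ, U α) ∧
    (∀ γ < κ, ∀ x ∈ U (γ + 1) \ U γ, ∀ y ∈ U (γ + 1) \ U γ, g x = g y)

/-- The transfinite derivation of open sets in the definition of the oscillation rank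
`β(f, ε)`:  `U 0 = ∅`, `U (α+1) = U α ∪ {x ∉ U α : ∃ open V ∋ x, diam f (V \ U α) < ε}`,
and unions at limit ordinals. -/
noncomputable def oscSet [TopologicalSpace X] [PseudoEMetricSpace E] (f : X → E)
    (ε : ℝ≥0∞) (o : Ordinal.{u}) : Set X :=
  Ordinal.limitRecOn o ∅
    (fun _ U => U ∪ {x | x ∉ U ∧ ∃ V : Set X, IsOpen V ∧ x ∈ V ∧
      EMetric.diam (f '' (V \ U)) < ε})
    (fun γ _ ih => ⋃ (β : Ordinal) (h : β < γ), ih β h)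

/-- `f` has countable oscillation rank: `β(f) < ω₁`, i.e. for every `ε > 0` the derivation
reaches `X` at some countable ordinal. -/
def CountableOscRank [TopologicalSpace X] [PseudoEMetricSpace E] (f : X → E) : Prop :=
  ∀ ε : ℝ≥0∞, 0 < ε → ∃ α < ω₁, oscSet f ε α = Set.univ

/-- A transfinite sequence `(V α)_{α ≤ κ}` of open sets has property `*(f, ε)`. -/
def StarProp [TopologicalSpace X] [PseudoEMetricSpace E] (f : X → E) (ε : ℝ≥0∞)
    (κ : Ordinal.{u}) (V : Ordinal.{u} → Set X) : Prop :=
  (∀ α, α ≤ κ → IsOpen (V α)) ∧ (∀ α β : Ordinal, α ≤ β → β ≤ κ → V α ⊆ V β) ∧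
  V 0 = ∅ ∧ V κ = Set.univ ∧
  (∀ γ, γ ≤ κ → Order.IsSuccLimit γ → V γ = ⋃ α < γ, V α) ∧
  (∀ α < κ, ∀ x ∈ V (α + 1) \ V α, ∃ W : Set X, IsOpen W ∧ x ∈ W ∧
    EMetric.diam (f '' (W \ V α)) < ε)

/-- Uniform distance `d(f, g) = sup_x ρ(f x, g x)` (in `[0, ∞]`). -/
noncomputable def unifDist [PseudoEMetricSpace E] (f g : X → E) : ℝ≥0∞ :=
  ⨆ x, edist (f x) (g x)

/-- Distance from `f` to the family of σ-fragmented mappings. -/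
noncomputable def distToSFrag [TopologicalSpace X] [PseudoEMetricSpace E] (f : X → E) : ℝ≥0∞ :=
  ⨅ (g : {g : X → E // sfragIdx g = 0}), unifDist f g.1

end Defs


section Aux

variable {X : Type u} {E : Type v} [TopologicalSpace X] [PseudoEMetricSpace E]

lemma oscSet_zero (f : X → E) (ε : ℝ≥0∞) : oscSet f ε 0 = ∅ :=
  Ordinal.limitRecOn_zero _ _ _

lemma oscSet_succ (f : X → E) (ε : ℝ≥0∞) (o : Ordinal.{u}) :
    oscSet f ε (Order.succ o) = oscSet f ε o ∪ {x | x ∉ oscSet f ε o ∧ ∃ V : Set X,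
      IsOpen V ∧ x ∈ V ∧ EMetric.diam (f '' (V \ oscSet f ε o)) < ε} :=
  Ordinal.limitRecOn_succ _ _ _ _

lemma oscSet_limit (f : X → E) (ε : ℝ≥0∞) {o : Ordinal.{u}} (ho : Order.IsSuccLimit o) :
    oscSet f ε o = ⋃ β < o, oscSet f ε β :=
  Ordinal.limitRecOn_limit _ _ _ _ ho

lemma oscSet_mono (f : X → E) (ε : ℝ≥0∞) : ∀ {a b : Ordinal.{u}}, a ≤ b →
    oscSet f ε a ⊆ oscSet f ε b := by
  intro a b
  induction b using Ordinal.limitRecOn with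
  | zero =>
    intro hab
    rw [nonpos_iff_eq_zero.1 hab]
  | add_one b IH =>
    rw [Ordinal.add_one_eq_succ]
    intro hab
    rcases eq_or_lt_of_le hab with h | h
    · rw [h]
    · refine (IH (Order.lt_succ_iff.1 h)).trans ?_
      rw [oscSet_succ]
      exact Set.subset_union_left
  | limit b hb IH =>
    intro hab
    rcases eq_or_lt_of_le hab with h | h
    · rw [h]
    · rw [oscSet_limit f ε hb]
      exact Set.subset_biUnion_of_mem (u := fun β => oscSet f ε β) h

lemma mem_oscSet_succ {f : X → E} {ε : ℝ≥0∞} {o : Ordinal.{u}} {x : X}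
    (hx : x ∉ oscSet f ε o)
    (h : ∃ V : Set X, IsOpen V ∧ x ∈ V ∧ EMetric.diam (f '' (V \ oscSet f ε o)) < ε) :
    x ∈ oscSet f ε (Order.succ o) := by
  rw [oscSet_succ]
  exact Or.inr ⟨hx, h⟩

lemma subset_oscSet_succ {f : X → E} {ε : ℝ≥0∞} {o : Ordinal.{u}} {V : Set X}
    (hV : IsOpen V) (hd : EMetric.diam (f '' (V \ oscSet f ε o)) < ε) :
    V \ oscSet f ε o ⊆ oscSet f ε (Order.succ o) :=
  fun _y hy => mem_oscSet_succ hy.2 ⟨V, hV, hy.1, hd⟩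

end Aux

/-- for a commutative Banach algebra `E`, the product of two bounded maps of
countable oscillation rank has countable oscillation rank. -/
theorem stmt_16 {X E : Type*} [TopologicalSpace X] [NormedCommRing E]
    [NormedAlgebra ℝ E] [CompleteSpace E]
    (f g : X → E)
    (hfb : Bornology.IsBounded (Set.range f)) (hgb : Bornology.IsBounded (Set.range g))
    (hf : CountableOscRank f) (hg : CountableOscRank g) :
    CountableOscRank (fun x => f x * g x) := by
  intro ε hε
  classical
  set h : X → E := fun x => f x * g x with hh
  obtain ⟨Cf, hCf⟩ := isBounded_iff_forall_norm_le.1 hfb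
  obtain ⟨Cg, hCg⟩ := isBounded_iff_forall_norm_le.1 hgb
  set N : ℝ≥0∞ := ENNReal.ofReal (max Cf Cg) + 1 with hN
  have hN0 : N ≠ 0 := by simp [hN]
  have hNtop : N ≠ ⊤ := by simp [hN]
  have hNf : ∀ x, (‖f x‖₊ : ℝ≥0∞) ≤ N := by
    intro x
    calc (‖f x‖₊ : ℝ≥0∞) = ENNReal.ofReal ‖f x‖ := (ofReal_norm _).symm
    _ ≤ ENNReal.ofReal (max Cf Cg) :=
        ENNReal.ofReal_le_ofReal ((hCf _ (Set.mem_range_self x)).trans (le_max_left _ _))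
    _ ≤ N := le_self_add
  have hNg : ∀ x, (‖g x‖₊ : ℝ≥0∞) ≤ N := by
    intro x
    calc (‖g x‖₊ : ℝ≥0∞) = ENNReal.ofReal ‖g x‖ := (ofReal_norm _).symm
    _ ≤ ENNReal.ofReal (max Cf Cg) :=
        ENNReal.ofReal_le_ofReal ((hCg _ (Set.mem_range_self x)).trans (le_max_right _ _))
    _ ≤ N := le_self_add
  set δ : ℝ≥0∞ := min (ε / (4 * N)) 1 with hδ
  have hδ0 : 0 < δ := by
    refine lt_min ?_ one_pos
    exact ENNReal.div_pos hε.ne' (by finiteness)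
  have hδε : N * δ + N * δ < ε := by
    rcases eq_or_ne ε ⊤ with hε' | hε'
    · rw [hε']
      have h1 : N * δ + N * δ ≤ N * 1 + N * 1 := by
        gcongr <;> exact min_le_right _ _
      refine lt_of_le_of_lt h1 ?_
      simp only [mul_one]
      exact ENNReal.add_lt_top.2 ⟨hNtop.lt_top, hNtop.lt_top⟩
    · have h1 : N * δ + N * δ ≤ N * (ε / (4 * N)) + N * (ε / (4 * N)) := by
        gcongr <;> exact min_le_left _ _
      refine lt_of_le_of_lt h1 ?_
      have h2 : N * (ε / (4 * N)) + N * (ε / (4 * N)) = (N + N) * (ε / (4 * N)) := by ring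
      rw [h2]
      have h3 : (N + N) * (ε / (4 * N)) ≤ (N + N) * ε / (4 * N) := by
        rw [mul_div_assoc]
      refine lt_of_le_of_lt h3 ?_
      have h4 : (N + N) * ε / (4 * N) < ε := by
        rw [ENNReal.div_lt_iff (Or.inl (by simp [hN0])) (Or.inl (by finiteness))]
        calc (N + N) * ε = 2 * N * ε := by ring
        _ < 4 * N * ε := by
            have hεpos : 0 < ε := hε
            refine ENNReal.mul_lt_mul_left hε.ne' hε' ?_
            refine ENNReal.mul_lt_mul_left hN0 hNtop ?_
            norm_num
        _ = ε * (4 * N) := by ring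
      exact h4
  have key : ∀ S : Set X, EMetric.diam (f '' S) ≤ δ → EMetric.diam (g '' S) ≤ δ →
      EMetric.diam (h '' S) ≤ N * δ + N * δ := by
    intro S hdf hdg
    refine EMetric.diam_le ?_
    rintro _ ⟨x, hx, rfl⟩ _ ⟨y, hy, rfl⟩
    have e1 : edist (h x) (h y) = (‖f x * g x - f y * g y‖₊ : ℝ≥0∞) := by
      rw [edist_nndist, nndist_eq_nnnorm]
    have e2 : ‖f x * g x - f y * g y‖₊ ≤ ‖f x‖₊ * ‖g x - g y‖₊ + ‖f x - f y‖₊ * ‖g y‖₊ := by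
      have : f x * g x - f y * g y = f x * (g x - g y) + (f x - f y) * g y := by ring
      rw [this]
      exact (nnnorm_add_le _ _).trans (add_le_add (nnnorm_mul_le _ _) (nnnorm_mul_le _ _))
    have e3 : edist (h x) (h y) ≤ (‖f x‖₊ : ℝ≥0∞) * ‖g x - g y‖₊ + ‖f x - f y‖₊ * ‖g y‖₊ := by
      rw [e1]
      exact_mod_cast e2
    have hgd : (‖g x - g y‖₊ : ℝ≥0∞) ≤ δ := by
      rw [← nndist_eq_nnnorm, ← edist_nndist]
      exact (EMetric.edist_le_diam_of_mem (Set.mem_image_of_mem g hx)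
        (Set.mem_image_of_mem g hy)).trans hdg
    have hfd : (‖f x - f y‖₊ : ℝ≥0∞) ≤ δ := by
      rw [← nndist_eq_nnnorm, ← edist_nndist]
      exact (EMetric.edist_le_diam_of_mem (Set.mem_image_of_mem f hx)
        (Set.mem_image_of_mem f hy)).trans hdf
    refine e3.trans ?_
    calc (‖f x‖₊ : ℝ≥0∞) * ‖g x - g y‖₊ + ‖f x - f y‖₊ * ‖g y‖₊
        ≤ N * δ + δ * N := add_le_add (mul_le_mul' (hNf x) hgd) (mul_le_mul' hfd (hNg y))
      _ = N * δ + N * δ := by ring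
  obtain ⟨a, ha1, ha2⟩ := hf δ hδ0
  obtain ⟨b, hb1, hb2⟩ := hg δ hδ0
  have main : ∀ α : Ordinal, oscSet f δ α ⊆ oscSet h ε (b * α) := by
    intro α
    induction α using Ordinal.limitRecOn with
    | zero => rw [oscSet_zero]; exact Set.empty_subset _
    | add_one α IHα =>
      rw [Ordinal.add_one_eq_succ]
      have inner : ∀ β : Ordinal, oscSet f δ (Order.succ α) ∩ oscSet g δ β ⊆
          oscSet h ε (b * α + β) := by
        intro β
        induction β using Ordinal.limitRecOn with
        | zero => rw [oscSet_zero]; simp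
        | add_one β IHβ =>
          rw [Ordinal.add_one_eq_succ]
          rintro x ⟨hxU, hxW⟩
          set S := oscSet h ε (b * α + β) with hS
          have hstep : b * α + Order.succ β = Order.succ (b * α + β) := by
            rw [← Ordinal.add_one_eq_succ, ← Ordinal.add_one_eq_succ, add_assoc]
          rw [hstep]
          have hSsucc : S ⊆ oscSet h ε (Order.succ (b * α + β)) :=
            oscSet_mono h ε (Order.le_succ _)
          by_cases hxS : x ∈ S
          · exact hSsucc hxS
          have hUαS : oscSet f δ α ⊆ S :=
            IHα.trans (oscSet_mono h ε le_self_add)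
          have hxWβ : x ∉ oscSet g δ β := fun hW => hxS (IHβ ⟨hxU, hW⟩)
          have hxUα : x ∉ oscSet f δ α := fun hU => hxS (hUαS hU)
          rw [oscSet_succ] at hxU hxW
          obtain ⟨V, hVopen, hxV, hVd⟩ := (hxU.resolve_left hxUα).2
          obtain ⟨V', hV'open, hxV', hV'd⟩ := (hxW.resolve_left hxWβ).2
          have hsub1 : (V ∩ V') \ S ⊆ V \ oscSet f δ α := fun y hy =>
            ⟨hy.1.1, fun hyU => hy.2 (hUαS hyU)⟩
          have hsub2 : (V ∩ V') \ S ⊆ V' \ oscSet g δ β := by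
            intro y hy
            refine ⟨hy.1.2, fun hyW => hy.2 (IHβ ⟨?_, hyW⟩)⟩
            exact subset_oscSet_succ hVopen hVd (hsub1 hy)
          have hdf : EMetric.diam (f '' ((V ∩ V') \ S)) ≤ δ :=
            le_of_lt (lt_of_le_of_lt (EMetric.diam_mono (Set.image_mono hsub1)) hVd)
          have hdg : EMetric.diam (g '' ((V ∩ V') \ S)) ≤ δ :=
            le_of_lt (lt_of_le_of_lt (EMetric.diam_mono (Set.image_mono hsub2)) hV'd)
          exact mem_oscSet_succ hxS ⟨V ∩ V', hVopen.inter hV'open, ⟨hxV, hxV'⟩,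
            lt_of_le_of_lt (key _ hdf hdg) hδε⟩
        | limit β hβ IHβ =>
          rw [oscSet_limit g δ hβ, Set.inter_iUnion₂]
          refine Set.iUnion₂_subset fun γ hγ => ?_
          exact (IHβ γ hγ).trans (oscSet_mono h ε (add_le_add_right hγ.le _))
      have h1 : oscSet f δ (Order.succ α) ⊆ oscSet h ε (b * α + b) := by
        intro x hx
        exact inner b ⟨hx, by rw [hb2]; trivial⟩
      rwa [← Ordinal.mul_succ] at h1
    | limit α hα IHα =>
      rw [oscSet_limit f δ hα]
      refine Set.iUnion₂_subset fun γ hγ => ?_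
      exact (IHα γ hγ).trans (oscSet_mono h ε (mul_le_mul_right hγ.le b))
  refine ⟨b * a, ?_, ?_⟩
  · rw [← Cardinal.ord_aleph, Cardinal.lt_ord, Ordinal.card_mul]
    rw [← Cardinal.ord_aleph, Cardinal.lt_ord] at ha1 hb1
    exact Cardinal.mul_lt_of_lt (Cardinal.aleph0_le_aleph 1) hb1 ha1
  · rw [Set.eq_univ_iff_forall]
    intro x
    exact main a (ha2 ▸ Set.mem_univ x)
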